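/- For α₁ ∈ {1, 9}, the set A₁₆ of primary classes a in (ℤ[i]/16ℤ[i])^× satisfying N(a) ≡ α₁ (mod 16) and (2/a)₄ = (-1)^((α₁-9)/8) has cardinality φ(16)/2⁵, where φ(16) = #(ℤ[i]/16ℤ[i])^×. -/

import Mathlib

open Zsqrtd

/-- The imaginary unit in the Gaussian integers. -/
def gi : GaussianInt := ⟨0, 1⟩

/-- A Gaussian integer is primary if it is congruent to 1 modulo 2+2i. -/
def IsPrimaryGI (θ : GaussianInt) : Prop := (2 + 2 * gi) ∣ (θ - 1)

/-- (2/θ)₄ = i^(-b) for a primary Gaussian integer θ = a + 2bi. -/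
def chi2 (θ : GaussianInt) : GaussianInt := gi ^ (((-(θ.im / 2)) % 4).toNat)

@[ext]
structure R16 where
  re : ZMod 16
  im : ZMod 16
deriving DecidableEq, Fintype

namespace R16

instance : Zero R16 := ⟨⟨0, 0⟩⟩
instance : One R16 := ⟨⟨1, 0⟩⟩
instance : Add R16 := ⟨fun x y => ⟨x.re + y.re, x.im + y.im⟩⟩
instance : Neg R16 := ⟨fun x => ⟨-x.re, -x.im⟩⟩
instance : Mul R16 := ⟨fun x y => ⟨x.re * y.re - x.im * y.im, x.re * y.im + x.im * y.re⟩⟩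

@[simp] lemma zero_re : (0 : R16).re = 0 := rfl
@[simp] lemma zero_im : (0 : R16).im = 0 := rfl
@[simp] lemma one_re : (1 : R16).re = 1 := rfl
@[simp] lemma one_im : (1 : R16).im = 0 := rfl
@[simp] lemma add_re (x y : R16) : (x + y).re = x.re + y.re := rfl
@[simp] lemma add_im (x y : R16) : (x + y).im = x.im + y.im := rfl
@[simp] lemma neg_re (x : R16) : (-x).re = -x.re := rfl
@[simp] lemma neg_im (x : R16) : (-x).im = -x.im := rfl
@[simp] lemma mul_re (x y : R16) : (x * y).re = x.re * y.re - x.im * y.im := rfl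
@[simp] lemma mul_im (x y : R16) : (x * y).im = x.re * y.im + x.im * y.re := rfl

instance : CommRing R16 where
  add_assoc a b c := by ext <;> simp <;> ring
  zero_add a := by ext <;> simp
  add_zero a := by ext <;> simp
  add_comm a b := by ext <;> simp <;> ring
  mul_assoc a b c := by ext <;> simp <;> ring
  one_mul a := by ext <;> simp
  mul_one a := by ext <;> simp
  left_distrib a b c := by ext <;> simp <;> ring
  right_distrib a b c := by ext <;> simp <;> ring
  zero_mul a := by ext <;> simp
  mul_zero a := by ext <;> simp
  neg_add_cancel a := by ext <;> simp
  mul_comm a b := by ext <;> simp <;> ring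
  nsmul := nsmulRec
  zsmul := zsmulRec

/-- cheap unit predicate -/
def P (x : R16) : Prop := (x.re.val + x.im.val) % 2 = 1

instance : DecidablePred P := fun _ => inferInstanceAs (Decidable (_ = _))

lemma isUnit_zmod16 (u : ZMod 16) (h : u.val % 2 = 1) : IsUnit u := by
  have hcop : Nat.Coprime u.val (2 ^ 4) :=
    Nat.Coprime.pow_right _ (Nat.coprime_two_right.mpr (Nat.odd_iff.mpr h))
  norm_num at hcop
  have := (ZMod.isUnit_iff_coprime u.val 16).mpr hcop
  rwa [ZMod.natCast_val, ZMod.cast_id] at this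

lemma val_sq_parity (u : ZMod 16) : (u ^ 2).val % 2 = u.val % 2 := by
  have h1 : (u ^ 2).val = u.val * u.val % 16 := by rw [pow_two, ZMod.val_mul]
  have h2 := Nat.mod_two_eq_zero_or_one u.val
  have h3 : u.val * u.val % 2 = u.val % 2 := by
    rcases h2 with h | h <;> rw [Nat.mul_mod, h] <;> rfl
  omega

lemma odd_of_mul_mod16 (x y : ℕ) (h : x * y % 16 = 1) : x % 2 = 1 := by
  have h1 : x * y % 2 = x % 2 * (y % 2) % 2 := Nat.mul_mod x y 2
  have h2 : x * y % 2 = x * y % 16 % 2 := (Nat.mod_mod_of_dvd _ (by norm_num)).symm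
  rcases Nat.mod_two_eq_zero_or_one x with h3 | h3 <;> rw [h3] at h1 <;> omega

lemma isUnit_iff (x : R16) : IsUnit x ↔ P x := by
  constructor
  · rintro ⟨u, rfl⟩
    have h1 : (u : R16) * ↑u⁻¹ = 1 := u.mul_inv
    have hre := congrArg R16.re h1
    have him := congrArg R16.im h1
    simp only [mul_re, mul_im, one_re, one_im] at hre him
    have hn : ((u:R16).re^2 + (u:R16).im^2) * ((↑u⁻¹:R16).re^2 + (↑u⁻¹:R16).im^2) = 1 := by
      linear_combination ((u:R16).re * (↑u⁻¹:R16).re - (u:R16).im * (↑u⁻¹:R16).im + 1) * hre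
        + ((u:R16).re * (↑u⁻¹:R16).im + (u:R16).im * (↑u⁻¹:R16).re) * him
    have hval : (((u:R16).re^2 + (u:R16).im^2) * ((↑u⁻¹:R16).re^2 + (↑u⁻¹:R16).im^2)).val = 1 := by
      rw [hn]; rfl
    rw [ZMod.val_mul] at hval
    have hodd := odd_of_mul_mod16 _ _ hval
    rw [ZMod.val_add] at hodd
    have p1 := val_sq_parity (u:R16).re
    have p2 := val_sq_parity (u:R16).im
    unfold P
    omega
  · intro hp
    have hv : ((x.re^2 + x.im^2 : ZMod 16)).val % 2 = 1 := by
      rw [ZMod.val_add]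
      have p1 := val_sq_parity x.re
      have p2 := val_sq_parity x.im
      unfold P at hp
      omega
    obtain ⟨v, hv2⟩ := isUnit_zmod16 _ hv
    refine IsUnit.of_mul_eq_one (a := x) ⟨x.re * ↑v⁻¹, -x.im * ↑v⁻¹⟩ ?_
    have hvi : (x.re^2 + x.im^2) * ↑v⁻¹ = 1 := by rw [← hv2]; exact v.mul_inv
    ext
    · show x.re * (x.re * ↑v⁻¹) - x.im * (-x.im * ↑v⁻¹) = 1
      linear_combination hvi
    · show x.re * (-x.im * ↑v⁻¹) + x.im * (x.re * ↑v⁻¹) = 0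
      ring

noncomputable def unitsEquiv : R16ˣ ≃ {x : R16 // P x} :=
  Equiv.ofBijective (fun u => ⟨(u : R16), (isUnit_iff _).mp u.isUnit⟩)
    ⟨fun a b h => Units.ext (congrArg Subtype.val h),
     fun ⟨x, hx⟩ => by
       obtain ⟨u, hu⟩ := (isUnit_iff x).mpr hx
       exact ⟨u, Subtype.ext hu⟩⟩

set_option maxRecDepth 20000 in
lemma card_units : Nat.card R16ˣ = 128 := by
  rw [Nat.card_congr unitsEquiv, Nat.card_eq_fintype_card]
  decide



def f : GaussianInt →+* R16 where
  toFun θ := ⟨(θ.re : ZMod 16), (θ.im : ZMod 16)⟩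
  map_one' := by ext <;> simp [Zsqrtd.re_one, Zsqrtd.im_one]
  map_mul' x y := by
    ext <;> simp [Zsqrtd.re_mul, Zsqrtd.im_mul] <;> push_cast <;> ring
  map_zero' := by ext <;> simp [Zsqrtd.re_zero, Zsqrtd.im_zero]
  map_add' x y := by ext <;> simp [Zsqrtd.re_add, Zsqrtd.im_add]

@[simp] lemma f_re (θ : GaussianInt) : (f θ).re = (θ.re : ZMod 16) := rfl
@[simp] lemma f_im (θ : GaussianInt) : (f θ).im = (θ.im : ZMod 16) := rfl

lemma f_surjective : Function.Surjective f := by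
  intro r
  refine ⟨⟨(r.re.val : ℤ), (r.im.val : ℤ)⟩, ?_⟩
  ext <;> simp <;> rw [ZMod.natCast_val, ZMod.cast_id]

lemma ker_f : RingHom.ker f = Ideal.span {(16 : GaussianInt)} := by
  ext θ
  rw [RingHom.mem_ker, Ideal.mem_span_singleton]
  have h16 : (16 : GaussianInt) = ((16 : ℤ) : GaussianInt) := by norm_num
  rw [h16, Zsqrtd.intCast_dvd]
  constructor
  · intro h
    have hre := congrArg R16.re h
    have him := congrArg R16.im h
    simp only [f_re, f_im, zero_re, zero_im] at hre him
    exact ⟨(ZMod.intCast_zmod_eq_zero_iff_dvd _ _).mp (by exact_mod_cast hre),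
      (ZMod.intCast_zmod_eq_zero_iff_dvd _ _).mp (by exact_mod_cast him)⟩
  · rintro ⟨h1, h2⟩
    ext
    · simpa using (ZMod.intCast_zmod_eq_zero_iff_dvd _ 16).mpr (by exact_mod_cast h1)
    · simpa using (ZMod.intCast_zmod_eq_zero_iff_dvd _ 16).mpr (by exact_mod_cast h2)

noncomputable def e : (GaussianInt ⧸ Ideal.span {(16 : GaussianInt)}) ≃+* R16 :=
  (Ideal.quotEquivOfEq ker_f.symm).trans (RingHom.quotientKerEquivOfSurjective f_surjective)

lemma e_mk (θ : GaussianInt) : e (Ideal.Quotient.mk _ θ) = f θ := by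
  simp [e, Ideal.quotEquivOfEq_mk, RingHom.quotientKerEquivOfSurjective, RingHom.kerLift_mk]

end R16

lemma primary_iff (θ : GaussianInt) :
    IsPrimaryGI θ ↔ θ.re % 2 = 1 ∧ θ.im % 2 = 0 ∧ (θ.re - 1 + θ.im) % 4 = 0 := by
  unfold IsPrimaryGI
  have hg : (2 + 2 * gi : GaussianInt) = ⟨2, 2⟩ := by
    ext <;> simp [gi, Zsqrtd.re_add, Zsqrtd.im_add, Zsqrtd.re_mul, Zsqrtd.im_mul]
  rw [hg]
  constructor
  · rintro ⟨c, hc⟩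
    have hre := congrArg Zsqrtd.re hc
    have him := congrArg Zsqrtd.im hc
    simp [Zsqrtd.re_mul, Zsqrtd.im_mul, Zsqrtd.re_sub, Zsqrtd.im_sub,
      Zsqrtd.re_one, Zsqrtd.im_one] at hre him
    omega
  · rintro ⟨h1, h2, h3⟩
    refine ⟨⟨(θ.re - 1 + θ.im) / 4, (θ.im - (θ.re - 1)) / 4⟩, ?_⟩
    ext <;> simp [Zsqrtd.re_mul, Zsqrtd.im_mul, Zsqrtd.re_sub, Zsqrtd.im_sub,
      Zsqrtd.re_one, Zsqrtd.im_one] <;> omega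

lemma chi2_cases (θ : GaussianInt) :
    (chi2 θ = 1 ↔ (θ.im % 8 = 0 ∨ θ.im % 8 = 1)) ∧
    (chi2 θ = -1 ↔ (θ.im % 8 = 4 ∨ θ.im % 8 = 5)) := by
  unfold chi2
  have h4 : (-(θ.im / 2)) % 4 = 0 ∨ (-(θ.im / 2)) % 4 = 1 ∨
      (-(θ.im / 2)) % 4 = 2 ∨ (-(θ.im / 2)) % 4 = 3 := by omega
  rcases h4 with h | h | h | h <;> rw [h] <;>
    refine ⟨⟨fun hh => ?_, fun hh => ?_⟩, ⟨fun hh => ?_, fun hh => ?_⟩⟩ <;>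
    first
      | omega
      | (exfalso; revert hh; decide)
      | decide
      | (exfalso; omega)

def Q (c : ZMod 16) (j : ℤ) (x : R16) : Prop :=
  (x.re.val : ℤ) % 2 = 1 ∧ (x.im.val : ℤ) % 2 = 0 ∧
    ((x.re.val : ℤ) - 1 + (x.im.val : ℤ)) % 4 = 0 ∧
    x.re ^ 2 + x.im ^ 2 = c ∧ (x.im.val : ℤ) % 8 = j

instance (c : ZMod 16) (j : ℤ) : DecidablePred (Q c j) := fun _ =>
  inferInstanceAs (Decidable (_ ∧ _))

lemma norm_iff (θ : GaussianInt) (α₁ : ℤ) (h : α₁ % 16 = α₁) :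
    Zsqrtd.norm θ % 16 = α₁ ↔
      (R16.f θ).re ^ 2 + (R16.f θ).im ^ 2 = ((α₁ : ℤ) : ZMod 16) := by
  have h1 : (R16.f θ).re ^ 2 + (R16.f θ).im ^ 2
      = ((θ.re * θ.re + θ.im * θ.im : ℤ) : ZMod 16) := by
    simp only [R16.f_re, R16.f_im]; push_cast; ring
  have h2 : Zsqrtd.norm θ = θ.re * θ.re + θ.im * θ.im := by
    rw [Zsqrtd.norm_def]; ring
  rw [h1, h2, ZMod.intCast_eq_intCast_iff']
  norm_num [h]

lemma key1 (θ : GaussianInt) :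
    (IsPrimaryGI θ ∧ Zsqrtd.norm θ % 16 = 1 ∧ chi2 θ = -1) ↔ Q 1 4 (R16.f θ) := by
  have hre : (((R16.f θ).re).val : ℤ) = θ.re % 16 := ZMod.val_intCast θ.re
  have him : (((R16.f θ).im).val : ℤ) = θ.im % 16 := ZMod.val_intCast θ.im
  rw [primary_iff, norm_iff θ 1 (by norm_num), (chi2_cases θ).2]
  unfold Q
  constructor
  · rintro ⟨⟨p1, p2, p3⟩, p4, p5⟩
    exact ⟨by omega, by omega, by omega, by exact_mod_cast p4, by omega⟩
  · rintro ⟨q1, q2, q3, q4, q5⟩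
    exact ⟨⟨by omega, by omega, by omega⟩, by exact_mod_cast q4, by omega⟩

lemma key9 (θ : GaussianInt) :
    (IsPrimaryGI θ ∧ Zsqrtd.norm θ % 16 = 9 ∧ chi2 θ = 1) ↔ Q 9 0 (R16.f θ) := by
  have hre : (((R16.f θ).re).val : ℤ) = θ.re % 16 := ZMod.val_intCast θ.re
  have him : (((R16.f θ).im).val : ℤ) = θ.im % 16 := ZMod.val_intCast θ.im
  rw [primary_iff, norm_iff θ 9 (by norm_num), (chi2_cases θ).1]
  unfold Q
  constructor
  · rintro ⟨⟨p1, p2, p3⟩, p4, p5⟩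
    exact ⟨by omega, by omega, by omega, by exact_mod_cast p4, by omega⟩
  · rintro ⟨q1, q2, q3, q4, q5⟩
    exact ⟨⟨by omega, by omega, by omega⟩, by exact_mod_cast q4, by omega⟩

lemma ncard_aux (c : ZMod 16) (j : ℤ) (k : ℕ)
    (hk : (Finset.univ.filter (Q c j)).card = k) :
    Set.ncard {r : R16 | Q c j r} = k := by
  rw [Set.ncard_eq_toFinset_card', Set.toFinset_setOf]
  exact hk

set_option maxRecDepth 20000 in
lemma count1 : (Finset.univ.filter (Q 1 4)).card = 4 := by decide

set_option maxRecDepth 20000 in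
lemma count9 : (Finset.univ.filter (Q 9 0)).card = 4 := by decide

lemma card_units_quot :
    Nat.card (GaussianInt ⧸ Ideal.span {(16 : GaussianInt)})ˣ = 128 := by
  rw [Nat.card_congr (Units.mapEquiv R16.e.toMulEquiv).toEquiv]
  exact R16.card_units

lemma set_eq (c : ZMod 16) (j : ℤ) (a : ℤ) (v : GaussianInt)
    (key : ∀ θ : GaussianInt,
      (IsPrimaryGI θ ∧ Zsqrtd.norm θ % 16 = a ∧ chi2 θ = v) ↔ Q c j (R16.f θ)) :
    {x : GaussianInt ⧸ Ideal.span {(16 : GaussianInt)} |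
        ∃ θ : GaussianInt, Ideal.Quotient.mk (Ideal.span {(16 : GaussianInt)}) θ = x ∧
          IsPrimaryGI θ ∧ Zsqrtd.norm θ % 16 = a ∧ chi2 θ = v}
      = ⇑R16.e.symm '' {r : R16 | Q c j r} := by
  ext x
  simp only [Set.mem_setOf_eq, Set.mem_image]
  constructor
  · rintro ⟨θ, rfl, h⟩
    exact ⟨R16.f θ, (key θ).mp h, by rw [← R16.e_mk, RingEquiv.symm_apply_apply]⟩
  · rintro ⟨r, hr, rfl⟩
    obtain ⟨θ, rfl⟩ := R16.f_surjective r
    exact ⟨θ, by rw [← R16.e_mk, RingEquiv.symm_apply_apply], (key θ).mpr hr⟩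

/-- For α₁ ∈ {1, 9}, the set A₁₆ of primary classes a mod 16 with N(a) ≡ α₁ (mod 16)
and (2/a)₄ = (-1)^((α₁-9)/8) has cardinality φ(16)/2⁵, where
φ(16) = #(ℤ[i]/16ℤ[i])^×. -/
theorem stmt6 (α₁ : ℤ) (hα : α₁ = 1 ∨ α₁ = 9) :
    Set.ncard {x : GaussianInt ⧸ Ideal.span {(16 : GaussianInt)} |
        ∃ θ : GaussianInt, Ideal.Quotient.mk (Ideal.span {(16 : GaussianInt)}) θ = x ∧
          IsPrimaryGI θ ∧ Zsqrtd.norm θ % 16 = α₁ ∧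
          chi2 θ = (-1) ^ ((((α₁ - 9) / 8) % 2).toNat)} =
      Nat.card (GaussianInt ⧸ Ideal.span {(16 : GaussianInt)})ˣ / 2 ^ 5 := by
  rw [card_units_quot]
  norm_num
  rcases hα with rfl | rfl
  · have hpow : ((-1 : GaussianInt)) ^ ((((1 : ℤ) - 9) / 8) % 2).toNat = -1 := by norm_num
    rw [hpow]
    rw [set_eq 1 4 1 (-1) key1, Set.ncard_image_of_injective _ R16.e.symm.injective,
      ncard_aux 1 4 4 count1]
  · have hpow : ((-1 : GaussianInt)) ^ ((((9 : ℤ) - 9) / 8) % 2).toNat = 1 := by norm_num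
    rw [hpow]
    rw [set_eq 9 0 9 1 key9, Set.ncard_image_of_injective _ R16.e.symm.injective,
      ncard_aux 9 0 4 count9]
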